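/- Let M and N be closed, complementable submodules of A. Then M is isomorphic (as a Hilbert A-module) to a closed submodule of N if and only if P_M ⪯ P_N, i.e. there exists a projection p' ≤ P_N with P_M Murray–von Neumann equivalent to p'. -/

import Mathlib

variable {A : Type*}

/-- An orthogonal projection in a C*-algebra. -/
def IsProjectionElem [CStarAlgebra A] (p : A) : Prop := IsSelfAdjoint p ∧ p * p = p

/-- Murray–von Neumann equivalence of projections: `p ∼ q`. -/
def MvNEquiv [CStarAlgebra A] (p q : A) : Prop := ∃ v : A, v * star v = p ∧ star v * v = q

/-- Murray–von Neumann subequivalence `p ⪯ q`: `p` is equivalent to a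
subprojection of `q`. -/
def MvNSubEquiv [CStarAlgebra A] (p q : A) : Prop :=
  ∃ p' : A, IsProjectionElem p' ∧ p' * q = p' ∧ q * p' = p' ∧ MvNEquiv p p'

/-- `a` is invertible up to the pair of projections `(p, q)`. -/
def InvertibleUpTo [CStarAlgebra A] (a p q : A) : Prop :=
  ∃ b : A, (1 - q) * a * (1 - p) * b = 1 - q ∧ b * ((1 - q) * a * (1 - p)) = 1 - p

/-- An ideal of finite type elements in a unital C*-algebra `A`
(Kečkić–Lazović): a selfadjoint (two-sided, complex-linear) ideal possessing an
approximate unit of projections, and such that for any two projections `p, q`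
in the ideal there is `v` with `v v* = q` and `v* v ⊥ p`. -/
structure FiniteTypeIdeal (A : Type*) [CStarAlgebra A] where
  carrier : Set A
  zero_mem : (0 : A) ∈ carrier
  add_mem : ∀ {a b : A}, a ∈ carrier → b ∈ carrier → a + b ∈ carrier
  smul_mem : ∀ (c : ℂ) {a : A}, a ∈ carrier → c • a ∈ carrier
  mul_mem_left : ∀ (a : A) {b : A}, b ∈ carrier → a * b ∈ carrier
  mul_mem_right : ∀ (a : A) {b : A}, b ∈ carrier → b * a ∈ carrier
  star_mem : ∀ {a : A}, a ∈ carrier → star a ∈ carrier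
  approx_unit : ∀ {a : A}, a ∈ carrier → ∀ ε : ℝ, 0 < ε →
    ∃ p ∈ carrier, IsProjectionElem p ∧ ‖a * p - a‖ < ε ∧ ‖p * a - a‖ < ε
  exchange : ∀ {p q : A}, p ∈ carrier → q ∈ carrier →
    IsProjectionElem p → IsProjectionElem q →
    ∃ v : A, v * star v = q ∧ IsProjectionElem (star v * v + p)

variable [CStarAlgebra A]

/-- The orthogonal complement of a subset of `A`, viewed as a Hilbert
`A`-module over itself with inner product `⟪x, y⟫ = x* y`. -/
def OrthoComplement (S : Set A) : Set A := {x : A | ∀ n ∈ S, star n * x = 0}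

/-- A subset (submodule) of `A` is orthogonally complementable if every element
of `A` decomposes as a sum of an element of `S` and an element of `S^⊥`. -/
def IsOrthoComplementable (S : Set A) : Prop :=
  ∀ x : A, ∃ n ∈ S, ∃ m ∈ OrthoComplement S, x = n + m

/-- A closed submodule `N` of `A` is (topologically) complementable if there is
a closed submodule `L` with `N ⊓ L = 0` and `N + L = A`. -/
def IsComplementable (N : Submodule Aᵐᵒᵖ A) : Prop :=
  ∃ L : Submodule Aᵐᵒᵖ A, IsClosed (L : Set A) ∧ N ⊓ L = ⊥ ∧ N ⊔ L = ⊤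

/-- An orthogonal projection in `B(A)`: an idempotent which is self-adjoint
with respect to the `A`-valued inner product. -/
def IsOrthogonalProjectionOp (P : A →L[Aᵐᵒᵖ] A) : Prop :=
  P * P = P ∧ ∀ x y : A, star (P x) * y = star x * P y

/-- Invertibility of `F ∈ B(A)` up to a pair of projections `(P, Q)`. -/
def OpInvertibleUpTo (F P Q : A →L[Aᵐᵒᵖ] A) : Prop :=
  ∃ D : A →L[Aᵐᵒᵖ] A,
    (1 - Q) * F * (1 - P) * D = 1 - Q ∧ D * ((1 - Q) * F * (1 - P)) = 1 - P

/-- `M` is isomorphic, as a Hilbert `A`-module, to a closed submodule of `N`: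
there is a closed submodule `N' ≤ N` and a bounded `A`-linear map carrying `M`
onto `N'` which is bounded below on `M` (hence a topological module
isomorphism of `M` onto `N'`). -/
def IsomorphicToClosedSubmoduleOf (M N : Submodule Aᵐᵒᵖ A) : Prop :=
  ∃ N' : Submodule Aᵐᵒᵖ A, IsClosed (N' : Set A) ∧ N' ≤ N ∧
    ∃ T : A →L[Aᵐᵒᵖ] A, ⇑T '' (M : Set A) = (N' : Set A) ∧
      ∃ c : ℝ, 0 < c ∧ ∀ x ∈ M, c * ‖x‖ ≤ ‖T x‖

/-- Left multiplication as a continuous `Aᵐᵒᵖ`-linear map. -/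
noncomputable def KLmulL (a : A) : A →L[Aᵐᵒᵖ] A :=
  LinearMap.mkContinuous
    { toFun := fun x => a * x
      map_add' := fun x y => mul_add a x y
      map_smul' := fun m x => by
        simp only [RingHom.id_apply]
        rw [MulOpposite.smul_eq_mul_unop, MulOpposite.smul_eq_mul_unop, mul_assoc] }
    ‖a‖ (fun x => norm_mul_le a x)

@[simp] lemma KLmulL_apply (a x : A) : KLmulL a x = a * x := rfl

/-- The range submodule of a projection-like idempotent. -/
def KLrange (e : A) : Submodule Aᵐᵒᵖ A where
  carrier := {x : A | e * x = x}
  add_mem' := fun {x y} hx hy => by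
    simp only [Set.mem_setOf_eq] at *
    rw [mul_add, hx, hy]
  zero_mem' := mul_zero e
  smul_mem' := fun m x hx => by
    simp only [Set.mem_setOf_eq] at *
    rw [MulOpposite.smul_eq_mul_unop, ← mul_assoc, hx]

@[simp] lemma KLrange_mem (e x : A) : x ∈ KLrange e ↔ e * x = x := Iff.rfl

lemma KLrange_closed (e : A) : IsClosed ((KLrange e : Submodule Aᵐᵒᵖ A) : Set A) :=
  isClosed_eq (by fun_prop) continuous_id

lemma KLproj_norm_le_one {e : A} (he : IsProjectionElem e) : ‖e‖ ≤ 1 := by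
  have h1 : ‖star e * e‖ = ‖e‖ * ‖e‖ := CStarRing.norm_star_mul_self
  rw [he.1.star_eq, he.2] at h1
  nlinarith [norm_nonneg e]

lemma KLforward {p q s : A} (hp : IsProjectionElem p) (hq1 : star q = q)
    (hsp : s * p = s) (hqs : q * s = s) {c : ℝ} (hc : 0 < c)
    (hbd : ∀ x : A, p * x = x → c * ‖x‖ ≤ ‖s * x‖) : MvNSubEquiv p q := by
  letI := CStarAlgebra.spectralOrder A
  haveI := CStarAlgebra.spectralOrderedRing A
  set a := star s * s with ha
  have hasa : IsSelfAdjoint a := IsSelfAdjoint.star_mul_self s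
  have hanon : (0 : A) ≤ a := star_mul_self_nonneg s
  have hstars : p * star s = star s := by
    have h0 := congrArg star hsp
    rwa [star_mul, hp.1.star_eq] at h0
  have hpa : p * a = a := by rw [ha, ← mul_assoc, hstars]
  have hap : a * p = a := by rw [ha, mul_assoc, hsp]
  have hspecnn : ∀ l ∈ spectrum ℝ a, 0 ≤ l := fun l hl =>
    spectrum_nonneg_of_nonneg hanon hl
  -- the norm-square identity
  have hnormsq : ∀ x : A, IsSelfAdjoint x → ‖s * x‖ * ‖s * x‖ = ‖x * a * x‖ := by
    intro x hx
    rw [← CStarRing.norm_star_mul_self]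
    congr 1
    rw [star_mul, hx.star_eq, ha]
    simp [mul_assoc]
  -- spectral gap
  have hspec : ∀ l ∈ spectrum ℝ a, l = 0 ∨ c ^ 2 ≤ l := by
    intro l hl
    by_contra hcon
    push_neg at hcon
    obtain ⟨hl0, hlc⟩ := hcon
    have hlpos : 0 < l := lt_of_le_of_ne (hspecnn l hl) (Ne.symm hl0)
    set m := (l + c ^ 2) / 2 with hm
    have hlm : l < m := by rw [hm]; nlinarith
    have hmc : m < c ^ 2 := by rw [hm]; nlinarith
    have hm0 : 0 < m := lt_trans hlpos hlm
    set f : ℝ → ℝ := fun t => max 0 (min (t / l) ((m - t) / (m - l))) with hf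
    have hfc : Continuous f := by
      apply continuous_const.max
      exact (continuous_id.div_const l).min ((continuous_const.sub continuous_id).div_const _)
    set h : ℝ → ℝ := fun t => t * f t with hh
    have hhc : Continuous h := continuous_id.mul hfc
    set y := cfc h a with hy
    have hysa : IsSelfAdjoint y := cfc_predicate h a
    have hfzero : ∀ t : ℝ, m ≤ t → f t = 0 := by
      intro t ht
      rw [hf]
      simp only
      rw [max_eq_left]
      exact le_trans (min_le_right _ _) (div_nonpos_of_nonpos_of_nonneg (by linarith) (by linarith))
    -- y = a * cfc f a, hence p * y = y
    have hyaf : y = a * cfc f a := by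
      have h0 := cfc_mul (fun t : ℝ => t) f a continuous_id.continuousOn hfc.continuousOn
      rw [cfc_id' ℝ a hasa] at h0
      exact h0.symm ▸ (by exact cfc_congr fun t _ => rfl : y = cfc (fun t : ℝ => t * f t) a)
    have hpy : p * y = y := by rw [hyaf, ← mul_assoc, hpa]
    -- the element y * a * y as cfc
    have h1 : cfc (fun t : ℝ => h t * t) a = y * a := by
      have h0 := cfc_mul h (fun t : ℝ => t) a hhc.continuousOn continuous_id.continuousOn
      rw [cfc_id' ℝ a hasa] at h0
      exact h0
    have h2 : cfc (fun t : ℝ => h t * t * h t) a = y * a * y := by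
      have h0 := cfc_mul (fun t : ℝ => h t * t) h a
        ((hhc.mul continuous_id).continuousOn) hhc.continuousOn
      rw [h1] at h0
      exact h0
    have h3 : cfc (fun t : ℝ => m * (h t * h t)) a = m • (y * y) := by
      have h0 := cfc_const_mul m (fun t : ℝ => h t * h t) a ((hhc.mul hhc).continuousOn)
      have h0' := cfc_mul h h a hhc.continuousOn hhc.continuousOn
      rw [h0'] at h0
      exact h0
    -- upper estimate
    have hpt : ∀ t ∈ spectrum ℝ a, h t * t * h t ≤ m * (h t * h t) := by
      intro t ht
      rcases le_or_gt t m with htm | htm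
      · nlinarith [mul_self_nonneg (h t)]
      · have hft : f t = 0 := hfzero t htm.le
        have : h t = 0 := by rw [hh]; simp [hft]
        simp [this]
    have hub : y * a * y ≤ m • (y * y) := by
      rw [← h2, ← h3]
      exact cfc_mono hpt ((hhc.mul continuous_id).mul hhc).continuousOn
        (continuous_const.mul (hhc.mul hhc)).continuousOn
    have hyaynn : (0 : A) ≤ y * a * y := by
      rw [← h2]
      apply cfc_nonneg
      intro t ht
      have ht0 := hspecnn t ht
      have hft : 0 ≤ f t := le_max_left _ _
      have hsq : (0:ℝ) ≤ (t * f t) * (t * f t) := mul_self_nonneg _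
      have : h t * t * h t = t * ((t * f t) * (t * f t)) := by rw [hh]; ring
      rw [this]
      exact mul_nonneg ht0 hsq
    have hnub : ‖y * a * y‖ ≤ m * (‖y‖ * ‖y‖) := by
      calc ‖y * a * y‖ ≤ ‖m • (y * y)‖ :=
            CStarAlgebra.norm_le_norm_of_nonneg_of_le hyaynn hub
        _ = m * ‖y * y‖ := by rw [norm_smul, Real.norm_eq_abs, abs_of_pos hm0]
        _ = m * (‖y‖ * ‖y‖) := by
            rw [← CStarRing.norm_star_mul_self (x := y), hysa.star_eq]
    -- lower estimate
    have hylow : c * ‖y‖ ≤ ‖s * y‖ := hbd y hpy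
    have hnlb : c ^ 2 * (‖y‖ * ‖y‖) ≤ ‖y * a * y‖ := by
      rw [← hnormsq y hysa]
      have h0 := mul_le_mul hylow hylow (by positivity) (norm_nonneg _)
      nlinarith [norm_nonneg y]
    -- y ≠ 0
    have hyne : y ≠ 0 := by
      intro h0
      have hls : h l ∈ spectrum ℝ y := by
        rw [hy, cfc_map_spectrum h a hasa hhc.continuousOn]
        exact ⟨l, hl, rfl⟩
      have hfl : f l = 1 := by
        rw [hf]
        simp only
        rw [div_self (ne_of_gt hlpos), div_self (ne_of_gt (by linarith : (0:ℝ) < m - l))]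
        norm_num
      have hhl : h l = l := by rw [hh]; simp [hfl]
      rw [h0, hhl] at hls
      have : IsUnit (algebraMap ℝ A l - 0) := by
        rw [sub_zero]
        exact (isUnit_iff_ne_zero.mpr (ne_of_gt hlpos)).map (algebraMap ℝ A)
      exact (spectrum.mem_iff.mp hls) this
    have hyp : 0 < ‖y‖ := norm_pos_iff.mpr hyne
    have hN : 0 < ‖y‖ * ‖y‖ := mul_pos hyp hyp
    have hfin := hnlb.trans hnub
    nlinarith
  -- construction of the partial isometry
  set k := c ^ 2 with hk
  have hk0 : 0 < k := by positivity
  set χ : ℝ → ℝ := fun t => min 1 ((2 / k) * max 0 (t - k / 2)) with hχ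
  have hχc : Continuous χ := continuous_const.min
    (continuous_const.mul (continuous_const.max (continuous_id.sub continuous_const)))
  have hχ0 : χ 0 = 0 := by
    rw [hχ]
    simp only
    rw [max_eq_left (by linarith : (0:ℝ) - k / 2 ≤ 0), mul_zero]
    exact min_eq_right zero_le_one
  have hχ1 : ∀ t : ℝ, k ≤ t → χ t = 1 := by
    intro t htk
    rw [hχ]
    simp only
    rw [max_eq_right (by linarith : (0:ℝ) ≤ t - k / 2)]
    apply min_eq_left
    rw [div_mul_eq_mul_div, le_div_iff₀ hk0]
    nlinarith
  set den : ℝ → ℝ := fun t => max t (k / 2) * Real.sqrt (max t (k / 2)) with hden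
  have hmaxpos : ∀ t : ℝ, 0 < max t (k / 2) :=
    fun t => lt_of_lt_of_le (by linarith) (le_max_right _ _)
  have hdenpos : ∀ t : ℝ, 0 < den t :=
    fun t => mul_pos (hmaxpos t) (Real.sqrt_pos.mpr (hmaxpos t))
  have hdenc : Continuous den := (continuous_id.max continuous_const).mul
    (Real.continuous_sqrt.comp (continuous_id.max continuous_const))
  set g : ℝ → ℝ := fun t => χ t / den t with hg
  have hgc : Continuous g := hχc.div hdenc (fun t => (hdenpos t).ne')
  set g2 : ℝ → ℝ := fun t => χ t / max t (k / 2) with hg2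
  have hg2c : Continuous g2 :=
    hχc.div (continuous_id.max continuous_const) (fun t => (hmaxpos t).ne')
  set e := cfc χ a with he
  have hesa : IsSelfAdjoint e := cfc_predicate χ a
  set d := cfc (fun t => t * g t) a with hd
  have hdsa : IsSelfAdjoint d := cfc_predicate _ a
  have hidgc : Continuous fun t : ℝ => t * g t := continuous_id.mul hgc
  have hdeq : d = a * cfc g a := by
    have h0 := cfc_mul (fun t : ℝ => t) g a continuous_id.continuousOn hgc.continuousOn
    rw [cfc_id' ℝ a hasa] at h0
    exact h0
  have hdeq' : d = cfc g a * a := by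
    have h0 := cfc_mul g (fun t : ℝ => t) a hgc.continuousOn continuous_id.continuousOn
    rw [cfc_id' ℝ a hasa] at h0
    rw [hd, ← h0]
    exact cfc_congr fun t _ => mul_comm t (g t)
  have hpd : p * d = d := by rw [hdeq, ← mul_assoc, hpa]
  have hdp : d * p = d := by rw [hdeq', mul_assoc, hap]
  -- d * a * d = e
  have hdad : d * a * d = e := by
    have h1 : cfc (fun t : ℝ => (t * g t) * t) a = d * a := by
      have h0 := cfc_mul (fun t : ℝ => t * g t) (fun t : ℝ => t) a
        hidgc.continuousOn continuous_id.continuousOn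
      rw [cfc_id' ℝ a hasa] at h0
      exact h0
    have h2 : cfc (fun t : ℝ => (t * g t) * t * (t * g t)) a = d * a * d := by
      have h0 := cfc_mul (fun t : ℝ => (t * g t) * t) (fun t : ℝ => t * g t) a
        ((hidgc.mul continuous_id).continuousOn) hidgc.continuousOn
      rw [h1] at h0
      exact h0
    rw [← h2, he]
    apply cfc_congr
    intro t ht
    rcases hspec t ht with h0 | hk'
    · simp [h0, hχ0]
    · have htpos : 0 < t := lt_of_lt_of_le hk0 hk'
      have hmax : max t (k / 2) = t := max_eq_left (by linarith)
      have hst : Real.sqrt t * Real.sqrt t = t := Real.mul_self_sqrt htpos.le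
      have hsqpos : 0 < Real.sqrt t := Real.sqrt_pos.mpr htpos
      have hgt : g t = 1 / (t * Real.sqrt t) := by
        rw [hg, hden]
        simp only
        rw [hmax, hχ1 t hk']
      simp only
      rw [hgt, hχ1 t hk']
      have hne : t * Real.sqrt t ≠ 0 := by positivity
      field_simp
      linear_combination (-1 : ℝ) * hst
  -- a * e = a
  have hae : a * e = a := by
    have h0 := cfc_mul (fun t : ℝ => t) χ a continuous_id.continuousOn hχc.continuousOn
    rw [cfc_id' ℝ a hasa] at h0
    have h1 : cfc (fun t : ℝ => t * χ t) a = cfc (fun t : ℝ => t) a := by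
      apply cfc_congr
      intro t ht
      rcases hspec t ht with h2 | hk'
      · simp [h2, hχ0]
      · simp [hχ1 t hk']
    rw [h1, cfc_id' ℝ a hasa] at h0
    rw [he, ← h0]
  -- e is an idempotent below p
  have hee : e * e = e := by
    have h0 := cfc_mul χ χ a hχc.continuousOn hχc.continuousOn
    rw [he, ← h0]
    apply cfc_congr
    intro t ht
    rcases hspec t ht with h2 | hk'
    · simp [h2, hχ0]
    · simp [hχ1 t hk']
  have hpe : p * e = e := by
    have h0 := cfc_mul (fun t : ℝ => t) g2 a continuous_id.continuousOn hg2c.continuousOn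
    rw [cfc_id' ℝ a hasa] at h0
    have h1 : cfc (fun t : ℝ => t * g2 t) a = e := by
      rw [he]
      apply cfc_congr
      intro t ht
      rcases hspec t ht with h2 | hk'
      · simp [h2, hχ0, hg2]
      · have htpos : 0 < t := lt_of_lt_of_le hk0 hk'
        have hmax : max t (k / 2) = t := max_eq_left (by linarith)
        simp only [hg2]
        rw [hmax]
        field_simp
    rw [← h1, h0, ← mul_assoc, hpa]
  have hep : e * p = e := by
    have h0 := congrArg star hpe
    rwa [star_mul, hesa.star_eq, hp.1.star_eq] at h0
  -- e = p
  have hexp : e = p := by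
    set x := p - e with hx
    have hpx : p * x = x := by rw [hx, mul_sub, hp.2, hpe]
    have hxsa : IsSelfAdjoint x := hp.1.sub hesa
    have hax : a * x = 0 := by rw [hx, mul_sub, hap, hae, sub_self]
    have hxax : x * a * x = 0 := by rw [mul_assoc, hax, mul_zero]
    have h0 := hbd x hpx
    have h1 : ‖s * x‖ * ‖s * x‖ = 0 := by rw [hnormsq x hxsa, hxax, norm_zero]
    have h2 : ‖s * x‖ = 0 := by nlinarith [norm_nonneg (s * x)]
    have h3 : ‖x‖ ≤ 0 := by nlinarith
    have h4 : x = 0 := norm_le_zero_iff.mp h3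
    rw [hx] at h4
    exact (sub_eq_zero.mp h4).symm
  -- the partial isometry
  set v := s * d with hv
  have hvsv : star v * v = p := by
    rw [hv, star_mul, hdsa.star_eq]
    calc d * star s * (s * d) = d * (star s * s) * d := by rw [← mul_assoc (d * star s) s d, mul_assoc d (star s) s]
      _ = d * a * d := by rw [← ha]
      _ = e := hdad
      _ = p := hexp
  have hvp : v * p = v := by rw [hv, mul_assoc, hdp]
  have hqv : q * v = v := by rw [hv, ← mul_assoc, hqs]
  have hp'sa : IsSelfAdjoint (v * star v) := by
    rw [IsSelfAdjoint, star_mul, star_star]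
  have hqp' : q * (v * star v) = v * star v := by rw [← mul_assoc, hqv]
  refine ⟨v * star v, ⟨hp'sa, ?_⟩, ?_, hqp', star v, ?_, ?_⟩
  · calc v * star v * (v * star v) = v * (star v * v) * star v := by rw [← mul_assoc (v * star v) v (star v), mul_assoc v (star v) v]
      _ = v * p * star v := by rw [hvsv]
      _ = v * star v := by rw [hvp]
  · have h0 := congrArg star hqp'
    rwa [star_mul, hp'sa.star_eq, hq1] at h0
  · rw [star_star]
    exact hvsv
  · rw [star_star]

/-- Lemma R12 L02: for closed complementable submodules `M, N` of `A` with
orthogonal projections `p = P_M`, `q = P_N`, `M` is isomorphic to a closed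
submodule of `N` iff `P_M ⪯ P_N` (Murray–von Neumann subequivalence). -/
theorem isomorphicToSubmodule_iff_subEquiv (M N : Submodule Aᵐᵒᵖ A)
    (hM : IsClosed (M : Set A)) (hN : IsClosed (N : Set A))
    (hMc : IsComplementable M) (hNc : IsComplementable N)
    (p q : A) (hp : IsProjectionElem p) (hq : IsProjectionElem q)
    (hpr : {x : A | p * x = x} = (M : Set A))
    (hqr : {x : A | q * x = x} = (N : Set A)) :
    IsomorphicToClosedSubmoduleOf M N ↔ MvNSubEquiv p q := by
  constructor
  · rintro ⟨N', hN'cl, hN'N, T, hTim, c, hc, hbd⟩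
    have hTx : ∀ x : A, T x = T 1 * x := by
      intro x
      have h1 : (MulOpposite.op x) • (1 : A) = x := by
        rw [MulOpposite.smul_eq_mul_unop, MulOpposite.unop_op, one_mul]
      calc T x = T ((MulOpposite.op x) • (1 : A)) := by rw [h1]
        _ = (MulOpposite.op x) • T 1 := T.map_smul _ _
        _ = T 1 * x := by rw [MulOpposite.smul_eq_mul_unop, MulOpposite.unop_op]
    set s := T 1 * p with hs
    have hsp : s * p = s := by rw [hs, mul_assoc, hp.2]
    have hqs : q * s = s := by
      have hpM : p ∈ (M : Set A) := by
        have h1 : p ∈ {z : A | p * z = z} := hp.2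
        rwa [hpr] at h1
      have h2 : T p ∈ (N' : Set A) := by
        rw [← hTim]; exact ⟨p, hpM, rfl⟩
      have h3 : T p ∈ (N : Set A) := hN'N h2
      have h4 : T p ∈ {z : A | q * z = z} := by rwa [hqr]
      have h5 : q * T p = T p := h4
      rw [hs, ← hTx p]
      exact h5
    have hbd' : ∀ x : A, p * x = x → c * ‖x‖ ≤ ‖s * x‖ := by
      intro x hx
      have hxM : x ∈ M := by
        have h1 : x ∈ {z : A | p * z = z} := hx
        rw [hpr] at h1
        exact h1
      have h2 : s * x = T x := by rw [hs, mul_assoc, hx, ← hTx x]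
      rw [h2]
      exact hbd x hxM
    exact KLforward hp hq.1.star_eq hsp hqs hc hbd'
  · rintro ⟨p', ⟨hp'sa, hp'i⟩, hp'q, hqp', v, hvv, hvv'⟩
    refine ⟨KLrange p', KLrange_closed p', ?_, KLmulL (star v), ?_, 1, one_pos, ?_⟩
    · intro x hx
      have hx' : p' * x = x := hx
      have h1 : q * x = x := by rw [← hx', ← mul_assoc, hqp', hx']
      have h2 : x ∈ {z : A | q * z = z} := h1
      rw [hqr] at h2
      exact h2
    · ext y
      constructor
      · rintro ⟨x, hxM, rfl⟩
        have hpx : p * x = x := by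
          have h1 : x ∈ {z : A | p * z = z} := by rw [hpr]; exact hxM
          exact h1
        show p' * (KLmulL (star v) x) = KLmulL (star v) x
        simp only [KLmulL_apply]
        calc p' * (star v * x) = (star v * v) * (star v * x) := by rw [hvv']
          _ = star v * ((v * star v) * x) := by
              rw [mul_assoc, ← mul_assoc v (star v) x]
          _ = star v * x := by rw [hvv, hpx]
      · intro hy
        have hy' : p' * y = y := hy
        refine ⟨v * y, ?_, ?_⟩
        · show v * y ∈ (M : Set A)
          rw [← hpr]
          show p * (v * y) = v * y
          calc p * (v * y) = (v * star v) * (v * y) := by rw [hvv]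
            _ = v * ((star v * v) * y) := by
                rw [mul_assoc, ← mul_assoc (star v) v y]
            _ = v * y := by rw [hvv', hy']
        · simp only [KLmulL_apply]
          rw [← mul_assoc, hvv', hy']
    · intro x hxM
      have hpx : p * x = x := by
        have h1 : x ∈ {z : A | p * z = z} := by rw [hpr]; exact hxM
        exact h1
      have hvn : ‖v‖ ≤ 1 := by
        have h1 : ‖star v * v‖ = ‖v‖ * ‖v‖ := CStarRing.norm_star_mul_self
        rw [hvv'] at h1
        have h2 : ‖p'‖ ≤ 1 := KLproj_norm_le_one ⟨hp'sa, hp'i⟩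
        nlinarith [norm_nonneg v, norm_nonneg p']
      have hx2 : v * (star v * x) = x := by rw [← mul_assoc, hvv, hpx]
      simp only [KLmulL_apply]
      calc 1 * ‖x‖ = ‖v * (star v * x)‖ := by rw [one_mul, hx2]
        _ ≤ ‖v‖ * ‖star v * x‖ := norm_mul_le _ _
        _ ≤ 1 * ‖star v * x‖ := mul_le_mul_of_nonneg_right hvn (norm_nonneg _)
        _ = ‖star v * x‖ := one_mul _
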